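/- Consider functions κ : {1,2,3,4} → {0,1,2,3,4} (in Lean: Fin 4 → Fin 5). Call κ and κ' equivalent if κ' = σ̃ ∘ κ ∘ τ̂ for some permutations σ, τ of {1,2,3}. This equivalence relation partitions the set of all 5⁴ = 625 such functions into exactly 52 equivalence classes (orbits of the natural S₃ × S₃ action). -/

import Mathlib

/-- The identification of `{1,2,3}` (modelled by `Fin 3`) with the subset `{1,2,3}`
of `{0,1,2,3,4}` (modelled by `Fin 5`), sending `i` to `i + 1`. -/
def embFive : Fin 3 ≃ {j : Fin 5 // 1 ≤ j.val ∧ j.val ≤ 3} where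
  toFun i := ⟨⟨i.val + 1, by have := i.isLt; omega⟩,
    (by have := i.isLt; omega : 1 ≤ i.val + 1 ∧ i.val + 1 ≤ 3)⟩
  invFun j := ⟨j.val.val - 1, by have := j.property; omega⟩
  left_inv i := by apply Fin.ext; simp
  right_inv j := by
    apply Subtype.ext; apply Fin.ext
    have := j.property; simp; omega

/-- The identification of `{1,2,3}` (modelled by `Fin 3`) with the subset of indices
`{1,2,3}` of the index set `{1,2,3,4}` (modelled by `Fin 4`, where the index `4` is the
last element of `Fin 4`). -/
def embFour : Fin 3 ≃ {j : Fin 4 // j.val ≤ 2} where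
  toFun i := ⟨⟨i.val, by have := i.isLt; omega⟩, (by have := i.isLt; omega : i.val ≤ 2)⟩
  invFun j := ⟨j.val.val, by have := j.property; omega⟩
  left_inv i := Fin.ext rfl
  right_inv j := Subtype.ext (Fin.ext rfl)

/-- `σ̃`: the permutation of `{0,1,2,3,4}` fixing `0` and `4` and agreeing with `σ` on
`{1,2,3}`. -/
def tilde (σ : Equiv.Perm (Fin 3)) : Equiv.Perm (Fin 5) :=
  σ.extendDomain embFive

/-- `τ̂`: the permutation of the index set `{1,2,3,4}` fixing `4` and agreeing with `τ` on
`{1,2,3}`. -/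
def hat (τ : Equiv.Perm (Fin 3)) : Equiv.Perm (Fin 4) :=
  τ.extendDomain embFour

/-- Two punctured quartets `κ, κ' : {1,2,3,4} → {0,1,2,3,4}` are equivalent iff
`κ' = σ̃ ∘ κ ∘ τ̂` for some permutations `σ, τ` of `{1,2,3}`. -/
def pRel (κ κ' : Fin 4 → Fin 5) : Prop :=
  ∃ σ τ : Equiv.Perm (Fin 3), κ' = ⇑(tilde σ) ∘ κ ∘ ⇑(hat τ)

/-- The relation `pRel` is an equivalence relation on the `5⁴ = 625` functions
`{1,2,3,4} → {0,1,2,3,4}`, and it partitions them into exactly `52` equivalence classes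
(the orbits of the natural `S₃ × S₃` action). -/
theorem pRel_equiv : Equivalence pRel := by
  constructor
  · intro κ
    exact ⟨1, 1, by simp [tilde, hat, Equiv.Perm.extendDomain_one]⟩
  · rintro κ κ' ⟨σ, τ, rfl⟩
    refine ⟨σ⁻¹, τ⁻¹, ?_⟩
    funext x
    simp only [Function.comp_apply, tilde, hat]
    rw [← Equiv.Perm.extendDomain_inv, ← Equiv.Perm.extendDomain_inv]
    simp only [Equiv.Perm.inv_def, Equiv.symm_apply_apply, Equiv.apply_symm_apply]
  · rintro a b c ⟨σ, τ, rfl⟩ ⟨σ', τ', rfl⟩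
    refine ⟨σ' * σ, τ * τ', ?_⟩
    funext x
    simp [tilde, hat, ← Equiv.Perm.extendDomain_mul]

def tFuns : List (Fin 5 → Fin 5) :=
  [![0,1,2,3,4], ![0,2,1,3,4], ![0,3,2,1,4], ![0,1,3,2,4], ![0,2,3,1,4], ![0,3,1,2,4]]

def hFuns : List (Fin 4 → Fin 4) :=
  [![0,1,2,3], ![1,0,2,3], ![2,1,0,3], ![0,2,1,3], ![1,2,0,3], ![2,0,1,3]]

set_option maxRecDepth 4000 in
theorem tilde_mem : ∀ σ : Equiv.Perm (Fin 3), ⇑(tilde σ) ∈ tFuns := by decide +kernel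

set_option maxRecDepth 4000 in
theorem hat_mem : ∀ τ : Equiv.Perm (Fin 3), ⇑(hat τ) ∈ hFuns := by decide +kernel

theorem tilde_sur : ∀ f ∈ tFuns, ∃ σ : Equiv.Perm (Fin 3), f = ⇑(tilde σ) := by
  intro f hf
  simp [tFuns] at hf
  rcases hf with rfl | rfl | rfl | rfl | rfl | rfl
  · exact ⟨1, by decide +kernel⟩
  · exact ⟨Equiv.swap 0 1, by decide +kernel⟩
  · exact ⟨Equiv.swap 0 2, by decide +kernel⟩
  · exact ⟨Equiv.swap 1 2, by decide +kernel⟩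
  · exact ⟨finRotate 3, by decide +kernel⟩
  · exact ⟨finRotate 3 * finRotate 3, by decide +kernel⟩

theorem hat_sur : ∀ g ∈ hFuns, ∃ τ : Equiv.Perm (Fin 3), g = ⇑(hat τ) := by
  intro g hg
  simp [hFuns] at hg
  rcases hg with rfl | rfl | rfl | rfl | rfl | rfl
  · exact ⟨1, by decide +kernel⟩
  · exact ⟨Equiv.swap 0 1, by decide +kernel⟩
  · exact ⟨Equiv.swap 0 2, by decide +kernel⟩
  · exact ⟨Equiv.swap 1 2, by decide +kernel⟩
  · exact ⟨finRotate 3, by decide +kernel⟩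
  · exact ⟨finRotate 3 * finRotate 3, by decide +kernel⟩

theorem pRel_iff (a b : Fin 4 → Fin 5) :
    pRel a b ↔ ∃ f ∈ tFuns, ∃ g ∈ hFuns, b = f ∘ a ∘ g := by
  constructor
  · rintro ⟨σ, τ, rfl⟩
    exact ⟨_, tilde_mem σ, _, hat_mem τ, rfl⟩
  · rintro ⟨f, hf, g, hg, rfl⟩
    obtain ⟨σ, rfl⟩ := tilde_sur f hf
    obtain ⟨τ, rfl⟩ := hat_sur g hg
    exact ⟨σ, τ, rfl⟩

/-! ### Nat-encoded fast decision procedure -/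

/-- digit `i` in base 5 -/
def dig (n i : Nat) : Nat := n / 5 ^ i % 5

def eF (a : Fin 4 → Fin 5) : Nat :=
  (a 0).val + 5 * (a 1).val + 25 * (a 2).val + 125 * (a 3).val

def fc (f : Fin 5 → Fin 5) : Nat :=
  (f 0).val + 5 * (f 1).val + 25 * (f 2).val + 125 * (f 3).val + 625 * (f 4).val

def gc (g : Fin 4 → Fin 4) : Nat :=
  (g 0).val + 5 * (g 1).val + 25 * (g 2).val + 125 * (g 3).val

def act (F G n : Nat) : Nat :=
  dig F (dig n (dig G 0)) + 5 * dig F (dig n (dig G 1))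
    + 25 * dig F (dig n (dig G 2)) + 125 * dig F (dig n (dig G 3))

theorem dig_eF (a : Fin 4 → Fin 5) (x : Fin 4) : dig (eF a) x.val = (a x).val := by
  have h0 := (a 0).isLt; have h1 := (a 1).isLt; have h2 := (a 2).isLt; have h3 := (a 3).isLt
  fin_cases x <;> simp [dig, eF] <;> omega

theorem dig_fc (f : Fin 5 → Fin 5) (v : Fin 5) : dig (fc f) v.val = (f v).val := by
  have h0 := (f 0).isLt; have h1 := (f 1).isLt; have h2 := (f 2).isLt
  have h3 := (f 3).isLt; have h4 := (f 4).isLt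
  fin_cases v <;> simp [dig, fc] <;> omega

theorem dig_gc (g : Fin 4 → Fin 4) (x : Fin 4) : dig (gc g) x.val = (g x).val := by
  have h0 := (g 0).isLt; have h1 := (g 1).isLt; have h2 := (g 2).isLt; have h3 := (g 3).isLt
  fin_cases x <;> simp [dig, gc] <;> omega

theorem act_eq (f : Fin 5 → Fin 5) (g : Fin 4 → Fin 4) (a : Fin 4 → Fin 5) :
    act (fc f) (gc g) (eF a) = eF (f ∘ a ∘ g) := by
  show dig (fc f) (dig (eF a) (dig (gc g) (0 : Fin 4).val))
      + 5 * dig (fc f) (dig (eF a) (dig (gc g) (1 : Fin 4).val))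
      + 25 * dig (fc f) (dig (eF a) (dig (gc g) (2 : Fin 4).val))
      + 125 * dig (fc f) (dig (eF a) (dig (gc g) (3 : Fin 4).val)) = _
  rw [dig_gc g 0, dig_gc g 1, dig_gc g 2, dig_gc g 3,
    dig_eF a (g 0), dig_eF a (g 1), dig_eF a (g 2), dig_eF a (g 3),
    dig_fc f (a (g 0)), dig_fc f (a (g 1)), dig_fc f (a (g 2)), dig_fc f (a (g 3))]
  rfl

theorem eF_inj {a b : Fin 4 → Fin 5} (h : eF a = eF b) : a = b := by
  funext x
  have := (dig_eF a x).symm.trans (h ▸ dig_eF b x)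
  exact Fin.val_injective this

def Tcodes : List Nat := [2930, 2910, 2690, 2830, 2710, 2790]
def Gcodes : List Nat := [430, 426, 382, 410, 386, 402]

theorem TC_eq : Tcodes = tFuns.map fc := by decide +kernel
theorem GC_eq : Gcodes = hFuns.map gc := by decide +kernel

theorem pRel_iff' (a b : Fin 4 → Fin 5) :
    pRel a b ↔ ∃ F ∈ Tcodes, ∃ G ∈ Gcodes, eF b = act F G (eF a) := by
  rw [pRel_iff, TC_eq, GC_eq]
  constructor
  · rintro ⟨f, hf, g, hg, rfl⟩
    exact ⟨fc f, List.mem_map_of_mem hf, gc g, List.mem_map_of_mem hg, (act_eq f g a).symm⟩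
  · rintro ⟨F, hF, G, hG, h⟩
    obtain ⟨f, hf, rfl⟩ := List.mem_map.1 hF
    obtain ⟨g, hg, rfl⟩ := List.mem_map.1 hG
    exact ⟨f, hf, g, hg, eF_inj (h.trans (act_eq f g a))⟩


/-- The relation transported to base-5 codes. -/
def relB (n m : Nat) : Prop := ∃ F ∈ Tcodes, ∃ G ∈ Gcodes, m = act F G n

instance : DecidableRel relB := fun n m => by unfold relB; infer_instance

theorem pRel_iff2 (a b : Fin 4 → Fin 5) : pRel a b ↔ relB (eF a) (eF b) :=
  pRel_iff' a b

instance : DecidableRel pRel := fun a b => decidable_of_iff _ (pRel_iff2 a b).symm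

/-- Representatives of the 52 orbits. -/
def reps : List (Fin 4 → Fin 5) :=
  [![0,0,0,0],
   ![1,0,0,0],
   ![4,0,0,0],
   ![1,1,0,0],
   ![2,1,0,0],
   ![4,1,0,0],
   ![4,4,0,0],
   ![1,1,1,0],
   ![2,1,1,0],
   ![4,1,1,0],
   ![3,2,1,0],
   ![4,2,1,0],
   ![4,4,1,0],
   ![4,4,4,0],
   ![0,0,0,1],
   ![1,0,0,1],
   ![2,0,0,1],
   ![4,0,0,1],
   ![1,1,0,1],
   ![2,1,0,1],
   ![4,1,0,1],
   ![2,2,0,1],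
   ![3,2,0,1],
   ![4,2,0,1],
   ![4,4,0,1],
   ![1,1,1,1],
   ![2,1,1,1],
   ![4,1,1,1],
   ![2,2,1,1],
   ![3,2,1,1],
   ![4,2,1,1],
   ![4,4,1,1],
   ![2,2,2,1],
   ![3,2,2,1],
   ![4,2,2,1],
   ![4,3,2,1],
   ![4,4,2,1],
   ![4,4,4,1],
   ![0,0,0,4],
   ![1,0,0,4],
   ![4,0,0,4],
   ![1,1,0,4],
   ![2,1,0,4],
   ![4,1,0,4],
   ![4,4,0,4],
   ![1,1,1,4],
   ![2,1,1,4],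
   ![4,1,1,4],
   ![3,2,1,4],
   ![4,2,1,4],
   ![4,4,1,4],
   ![4,4,4,4]]

def repCodes : List Nat := [0, 1, 4, 6, 7, 9, 24, 31, 32, 34, 38, 39, 49, 124, 125, 126, 127, 129, 131, 132, 134, 137, 138, 139, 149, 156, 157, 159, 162, 163, 164, 174, 187, 188, 189, 194, 199, 249, 500, 501, 504, 506, 507, 509, 524, 531, 532, 534, 538, 539, 549, 624]

theorem repCodes_eq : reps.map eF = repCodes := by decide +kernel

theorem eF_lt (a : Fin 4 → Fin 5) : eF a < 625 := by
  have h0 := (a 0).isLt; have h1 := (a 1).isLt; have h2 := (a 2).isLt; have h3 := (a 3).isLt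
  unfold eF; omega

set_option maxRecDepth 4000 in
theorem codes_pairwise : repCodes.Pairwise (fun n m => ¬ relB n m) := by decide +kernel

/-- Witness table: entry `n` is `(r, F, G)` with `r ∈ repCodes`, `F ∈ Tcodes`, `G ∈ Gcodes`
and `n = act F G r`. -/
def witTab : List (Nat × Nat × Nat) :=
  [(0,2930,430),
   (1,2930,430),
   (1,2910,430),
   (1,2690,430),
   (4,2930,430),
   (1,2930,426),
   (6,2930,430),
   (7,2930,430),
   (7,2830,430),
   (9,2930,430),
   (1,2910,426),
   (7,2930,426),
   (6,2910,430),
   (7,2690,426),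
   (9,2910,430),
   (1,2690,426),
   (7,2830,426),
   (7,2690,430),
   (6,2690,430),
   (9,2690,430),
   (4,2930,426),
   (9,2930,426),
   (9,2910,426),
   (9,2690,426),
   (24,2930,430),
   (1,2930,382),
   (6,2930,410),
   (7,2930,410),
   (7,2830,410),
   (9,2930,410),
   (6,2930,382),
   (31,2930,430),
   (32,2930,430),
   (32,2830,430),
   (34,2930,430),
   (7,2930,402),
   (32,2930,426),
   (32,2910,382),
   (38,2930,430),
   (39,2930,430),
   (7,2830,402),
   (32,2830,426),
   (38,2930,426),
   (32,2790,382),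
   (39,2830,430),
   (9,2930,402),
   (34,2930,426),
   (39,2930,426),
   (39,2830,426),
   (49,2930,430),
   (1,2910,382),
   (7,2930,386),
   (6,2910,410),
   (7,2690,386),
   (9,2910,410),
   (7,2930,382),
   (32,2930,382),
   (32,2910,426),
   (38,2930,410),
   (39,2930,410),
   (6,2910,382),
   (32,2910,430),
   (31,2910,430),
   (32,2710,430),
   (34,2910,430),
   (7,2690,382),
   (38,2930,402),
   (32,2710,426),
   (32,2690,382),
   (39,2690,410),
   (9,2910,402),
   (39,2930,402),
   (34,2910,426),
   (39,2690,402),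
   (49,2910,430),
   (1,2690,382),
   (7,2830,386),
   (7,2690,410),
   (6,2690,410),
   (9,2690,410),
   (7,2830,382),
   (32,2830,382),
   (38,2930,386),
   (32,2790,426),
   (39,2830,410),
   (7,2690,402),
   (38,2930,382),
   (32,2710,382),
   (32,2690,426),
   (39,2690,430),
   (6,2690,382),
   (32,2790,430),
   (32,2690,430),
   (31,2690,430),
   (34,2690,430),
   (9,2690,402),
   (39,2830,402),
   (39,2690,426),
   (34,2690,426),
   (49,2690,430),
   (4,2930,382),
   (9,2930,386),
   (9,2910,386),
   (9,2690,386),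
   (24,2930,410),
   (9,2930,382),
   (34,2930,382),
   (39,2930,386),
   (39,2830,386),
   (49,2930,410),
   (9,2910,382),
   (39,2930,382),
   (34,2910,382),
   (39,2690,382),
   (49,2910,410),
   (9,2690,382),
   (39,2830,382),
   (39,2690,386),
   (34,2690,382),
   (49,2690,410),
   (24,2930,382),
   (49,2930,382),
   (49,2910,382),
   (49,2690,382),
   (124,2930,430),
   (125,2930,430),
   (126,2930,430),
   (127,2930,430),
   (127,2830,430),
   (129,2930,430),
   (126,2930,426),
   (131,2930,430),
   (132,2930,430),
   (132,2830,430),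
   (134,2930,430),
   (127,2930,426),
   (132,2930,426),
   (137,2930,430),
   (138,2930,430),
   (139,2930,430),
   (127,2830,426),
   (132,2830,426),
   (138,2930,426),
   (137,2830,430),
   (139,2830,430),
   (129,2930,426),
   (134,2930,426),
   (139,2930,426),
   (139,2830,426),
   (149,2930,430),
   (126,2930,382),
   (131,2930,410),
   (132,2930,410),
   (132,2830,410),
   (134,2930,410),
   (131,2930,382),
   (156,2930,430),
   (157,2930,430),
   (157,2830,430),
   (159,2930,430),
   (132,2930,402),
   (157,2930,426),
   (162,2930,430),
   (163,2930,430),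
   (164,2930,430),
   (132,2830,402),
   (157,2830,426),
   (163,2930,426),
   (162,2830,430),
   (164,2830,430),
   (134,2930,402),
   (159,2930,426),
   (164,2930,426),
   (164,2830,426),
   (174,2930,430),
   (127,2930,382),
   (132,2930,386),
   (137,2930,410),
   (138,2930,410),
   (139,2930,410),
   (132,2930,382),
   (157,2930,382),
   (162,2930,410),
   (163,2930,410),
   (164,2930,410),
   (137,2930,382),
   (162,2930,382),
   (187,2930,430),
   (188,2930,430),
   (189,2930,430),
   (138,2930,402),
   (163,2930,402),
   (188,2930,426),
   (188,2830,382),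
   (194,2930,430),
   (139,2930,402),
   (164,2930,402),
   (189,2930,426),
   (194,2930,426),
   (199,2930,430),
   (127,2830,382),
   (132,2830,386),
   (138,2930,386),
   (137,2830,410),
   (139,2830,410),
   (132,2830,382),
   (157,2830,382),
   (163,2930,386),
   (162,2830,410),
   (164,2830,410),
   (138,2930,382),
   (163,2930,382),
   (188,2930,382),
   (188,2830,426),
   (194,2930,410),
   (137,2830,382),
   (162,2830,382),
   (188,2830,430),
   (187,2830,430),
   (189,2830,430),
   (139,2830,402),
   (164,2830,402),
   (194,2930,402),
   (189,2830,426),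
   (199,2830,430),
   (129,2930,382),
   (134,2930,386),
   (139,2930,386),
   (139,2830,386),
   (149,2930,410),
   (134,2930,382),
   (159,2930,382),
   (164,2930,386),
   (164,2830,386),
   (174,2930,410),
   (139,2930,382),
   (164,2930,382),
   (189,2930,382),
   (194,2930,386),
   (199,2930,410),
   (139,2830,382),
   (164,2830,382),
   (194,2930,382),
   (189,2830,382),
   (199,2830,410),
   (149,2930,382),
   (174,2930,382),
   (199,2930,382),
   (199,2830,382),
   (249,2930,430),
   (125,2910,430),
   (127,2910,430),
   (126,2910,430),
   (127,2710,430),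
   (129,2910,430),
   (127,2910,426),
   (137,2910,430),
   (132,2910,426),
   (138,2910,430),
   (139,2910,430),
   (126,2910,426),
   (132,2910,430),
   (131,2910,430),
   (132,2710,430),
   (134,2910,430),
   (127,2710,426),
   (138,2910,426),
   (132,2710,426),
   (137,2710,430),
   (139,2710,430),
   (129,2910,426),
   (139,2910,426),
   (134,2910,426),
   (139,2710,426),
   (149,2910,430),
   (127,2910,382),
   (137,2910,410),
   (132,2910,386),
   (138,2910,410),
   (139,2910,410),
   (137,2910,382),
   (187,2910,430),
   (162,2910,382),
   (188,2910,430),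
   (189,2910,430),
   (132,2910,382),
   (162,2910,410),
   (157,2910,382),
   (163,2910,410),
   (164,2910,410),
   (138,2910,402),
   (188,2910,426),
   (163,2910,402),
   (188,2710,382),
   (194,2910,430),
   (139,2910,402),
   (189,2910,426),
   (164,2910,402),
   (194,2910,426),
   (199,2910,430),
   (126,2910,382),
   (132,2910,410),
   (131,2910,410),
   (132,2710,410),
   (134,2910,410),
   (132,2910,402),
   (162,2910,430),
   (157,2910,426),
   (163,2910,430),
   (164,2910,430),
   (131,2910,382),
   (157,2910,430),
   (156,2910,430),
   (157,2710,430),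
   (159,2910,430),
   (132,2710,402),
   (163,2910,426),
   (157,2710,426),
   (162,2710,430),
   (164,2710,430),
   (134,2910,402),
   (164,2910,426),
   (159,2910,426),
   (164,2710,426),
   (174,2910,430),
   (127,2710,382),
   (138,2910,386),
   (132,2710,386),
   (137,2710,410),
   (139,2710,410),
   (138,2910,382),
   (188,2910,382),
   (163,2910,382),
   (188,2710,426),
   (194,2910,410),
   (132,2710,382),
   (163,2910,386),
   (157,2710,382),
   (162,2710,410),
   (164,2710,410),
   (137,2710,382),
   (188,2710,430),
   (162,2710,382),
   (187,2710,430),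
   (189,2710,430),
   (139,2710,402),
   (194,2910,402),
   (164,2710,402),
   (189,2710,426),
   (199,2710,430),
   (129,2910,382),
   (139,2910,386),
   (134,2910,386),
   (139,2710,386),
   (149,2910,410),
   (139,2910,382),
   (189,2910,382),
   (164,2910,382),
   (194,2910,386),
   (199,2910,410),
   (134,2910,382),
   (164,2910,386),
   (159,2910,382),
   (164,2710,386),
   (174,2910,410),
   (139,2710,382),
   (194,2910,382),
   (164,2710,382),
   (189,2710,382),
   (199,2710,410),
   (149,2910,382),
   (199,2910,382),
   (174,2910,382),
   (199,2710,382),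
   (249,2910,430),
   (125,2690,430),
   (127,2790,430),
   (127,2690,430),
   (126,2690,430),
   (129,2690,430),
   (127,2790,426),
   (137,2790,430),
   (138,2690,426),
   (132,2790,426),
   (139,2790,430),
   (127,2690,426),
   (138,2690,430),
   (137,2690,430),
   (132,2690,426),
   (139,2690,430),
   (126,2690,426),
   (132,2790,430),
   (132,2690,430),
   (131,2690,430),
   (134,2690,430),
   (129,2690,426),
   (139,2790,426),
   (139,2690,426),
   (134,2690,426),
   (149,2690,430),
   (127,2790,382),
   (137,2790,410),
   (138,2690,386),
   (132,2790,386),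
   (139,2790,410),
   (137,2790,382),
   (187,2790,430),
   (188,2790,430),
   (162,2790,382),
   (189,2790,430),
   (138,2690,382),
   (188,2790,426),
   (188,2690,382),
   (163,2690,382),
   (194,2690,410),
   (132,2790,382),
   (162,2790,410),
   (163,2690,386),
   (157,2790,382),
   (164,2790,410),
   (139,2790,402),
   (189,2790,426),
   (194,2690,402),
   (164,2790,402),
   (199,2790,430),
   (127,2690,382),
   (138,2690,410),
   (137,2690,410),
   (132,2690,386),
   (139,2690,410),
   (138,2690,402),
   (188,2790,382),
   (188,2690,426),
   (163,2690,402),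
   (194,2690,430),
   (137,2690,382),
   (188,2690,430),
   (187,2690,430),
   (162,2690,382),
   (189,2690,430),
   (132,2690,382),
   (163,2690,410),
   (162,2690,410),
   (157,2690,382),
   (164,2690,410),
   (139,2690,402),
   (194,2690,426),
   (189,2690,426),
   (164,2690,402),
   (199,2690,430),
   (126,2690,382),
   (132,2790,410),
   (132,2690,410),
   (131,2690,410),
   (134,2690,410),
   (132,2790,402),
   (162,2790,430),
   (163,2690,426),
   (157,2790,426),
   (164,2790,430),
   (132,2690,402),
   (163,2690,430),
   (162,2690,430),
   (157,2690,426),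
   (164,2690,430),
   (131,2690,382),
   (157,2790,430),
   (157,2690,430),
   (156,2690,430),
   (159,2690,430),
   (134,2690,402),
   (164,2790,426),
   (164,2690,426),
   (159,2690,426),
   (174,2690,430),
   (129,2690,382),
   (139,2790,386),
   (139,2690,386),
   (134,2690,386),
   (149,2690,410),
   (139,2790,382),
   (189,2790,382),
   (194,2690,382),
   (164,2790,382),
   (199,2790,410),
   (139,2690,382),
   (194,2690,386),
   (189,2690,382),
   (164,2690,382),
   (199,2690,410),
   (134,2690,382),
   (164,2790,386),
   (164,2690,386),
   (159,2690,382),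
   (174,2690,410),
   (149,2690,382),
   (199,2790,382),
   (199,2690,382),
   (174,2690,382),
   (249,2690,430),
   (500,2930,430),
   (501,2930,430),
   (501,2910,430),
   (501,2690,430),
   (504,2930,430),
   (501,2930,426),
   (506,2930,430),
   (507,2930,430),
   (507,2830,430),
   (509,2930,430),
   (501,2910,426),
   (507,2930,426),
   (506,2910,430),
   (507,2690,426),
   (509,2910,430),
   (501,2690,426),
   (507,2830,426),
   (507,2690,430),
   (506,2690,430),
   (509,2690,430),
   (504,2930,426),
   (509,2930,426),
   (509,2910,426),
   (509,2690,426),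
   (524,2930,430),
   (501,2930,382),
   (506,2930,410),
   (507,2930,410),
   (507,2830,410),
   (509,2930,410),
   (506,2930,382),
   (531,2930,430),
   (532,2930,430),
   (532,2830,430),
   (534,2930,430),
   (507,2930,402),
   (532,2930,426),
   (532,2910,382),
   (538,2930,430),
   (539,2930,430),
   (507,2830,402),
   (532,2830,426),
   (538,2930,426),
   (532,2790,382),
   (539,2830,430),
   (509,2930,402),
   (534,2930,426),
   (539,2930,426),
   (539,2830,426),
   (549,2930,430),
   (501,2910,382),
   (507,2930,386),
   (506,2910,410),
   (507,2690,386),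
   (509,2910,410),
   (507,2930,382),
   (532,2930,382),
   (532,2910,426),
   (538,2930,410),
   (539,2930,410),
   (506,2910,382),
   (532,2910,430),
   (531,2910,430),
   (532,2710,430),
   (534,2910,430),
   (507,2690,382),
   (538,2930,402),
   (532,2710,426),
   (532,2690,382),
   (539,2690,410),
   (509,2910,402),
   (539,2930,402),
   (534,2910,426),
   (539,2690,402),
   (549,2910,430),
   (501,2690,382),
   (507,2830,386),
   (507,2690,410),
   (506,2690,410),
   (509,2690,410),
   (507,2830,382),
   (532,2830,382),
   (538,2930,386),
   (532,2790,426),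
   (539,2830,410),
   (507,2690,402),
   (538,2930,382),
   (532,2710,382),
   (532,2690,426),
   (539,2690,430),
   (506,2690,382),
   (532,2790,430),
   (532,2690,430),
   (531,2690,430),
   (534,2690,430),
   (509,2690,402),
   (539,2830,402),
   (539,2690,426),
   (534,2690,426),
   (549,2690,430),
   (504,2930,382),
   (509,2930,386),
   (509,2910,386),
   (509,2690,386),
   (524,2930,410),
   (509,2930,382),
   (534,2930,382),
   (539,2930,386),
   (539,2830,386),
   (549,2930,410),
   (509,2910,382),
   (539,2930,382),
   (534,2910,382),
   (539,2690,382),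
   (549,2910,410),
   (509,2690,382),
   (539,2830,382),
   (539,2690,386),
   (534,2690,382),
   (549,2690,410),
   (524,2930,382),
   (549,2930,382),
   (549,2910,382),
   (549,2690,382),
   (624,2930,430)]

set_option maxRecDepth 4000 in
theorem wit_ok : ∀ n ∈ List.range 625,
    (witTab.getD n (0,0,0)).1 ∈ repCodes ∧ (witTab.getD n (0,0,0)).2.1 ∈ Tcodes ∧
    (witTab.getD n (0,0,0)).2.2 ∈ Gcodes ∧ n = act (witTab.getD n (0,0,0)).2.1
      (witTab.getD n (0,0,0)).2.2 (witTab.getD n (0,0,0)).1 := by decide +kernel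

theorem codes_complete : ∀ n ∈ List.range 625, ∃ r ∈ repCodes, relB r n := by
  intro n hn
  obtain ⟨h1, h2, h3, h4⟩ := wit_ok n hn
  exact ⟨_, h1, _, h2, _, h3, h4⟩

theorem reps_pairwise : reps.Pairwise (fun a b => ¬ pRel a b) := by
  have h := codes_pairwise
  rw [← repCodes_eq, List.pairwise_map] at h
  exact h.imp (fun {a b} hab => by rw [pRel_iff2]; exact hab)

theorem reps_complete (κ : Fin 4 → Fin 5) : ∃ r ∈ reps, pRel r κ := by
  obtain ⟨c, hc, hrel⟩ := codes_complete (eF κ) (List.mem_range.2 (eF_lt κ))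
  rw [← repCodes_eq] at hc
  obtain ⟨r, hr, rfl⟩ := List.mem_map.1 hc
  exact ⟨r, hr, (pRel_iff2 r κ).2 hrel⟩

def pSetoid : Setoid (Fin 4 → Fin 5) := ⟨pRel, pRel_equiv⟩

theorem mkList_nodup : (reps.map (Quotient.mk pSetoid)).Nodup := by
  refine List.Pairwise.map _ ?_ reps_pairwise
  intro a b hab h
  exact hab (Quotient.exact h)

instance pQFintype : Fintype (Quotient pSetoid) where
  elems := ⟨(reps.map (Quotient.mk pSetoid) : List _), mkList_nodup⟩
  complete := by
    intro q
    induction q using Quotient.ind with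
    | _ κ =>
      obtain ⟨r, hr, hrel⟩ := reps_complete κ
      exact Finset.mem_mk.2 (List.mem_map.2 ⟨r, hr, Quotient.sound hrel⟩)

theorem fiftyTwo_orbits :
    Equivalence pRel ∧ Nat.card (Fin 4 → Fin 5) = 625 ∧ Nat.card (Quot pRel) = 52 := by
  refine ⟨pRel_equiv, by simp [Nat.card_eq_fintype_card], ?_⟩
  have : Nat.card (Quotient pSetoid) = 52 := by
    rw [Nat.card_eq_fintype_card]
    rfl
  exact this
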